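/- Let τ > 0 and f, g : [-τ,∞) → ℝ be continuous with f(-τ) > 0. If Λ₁ and Λ₂ are two continuous functions on [-τ, ∞), differentiable on (-τ,∞), both satisfying (1 + u/τ)·Λ'(u) + f(u)·Λ(u) - g(u) = 0 for all u > -τ, then Λ₁ = Λ₂ on [-τ, ∞). -/

import Mathlib

open Set intervalIntegral Real


/-- uniqueness of continuous solutions of the singular ODE
`(1 + u/τ)·Λ'(u) + f(u)·Λ(u) - g(u) = 0` on `[-τ, ∞)` when `f(-τ) > 0`. -/
theorem stmt1 (τ : ℝ) (hτ : 0 < τ) (f g : ℝ → ℝ)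
    (hf : ContinuousOn f (Set.Ici (-τ))) (hg : ContinuousOn g (Set.Ici (-τ)))
    (hfτ : 0 < f (-τ))
    (Λ₁ Λ₂ : ℝ → ℝ)
    (hc₁ : ContinuousOn Λ₁ (Set.Ici (-τ))) (hc₂ : ContinuousOn Λ₂ (Set.Ici (-τ)))
    (hd₁ : ∀ u, -τ < u → ∃ d : ℝ, HasDerivAt Λ₁ d u ∧
      (1 + u / τ) * d + f u * Λ₁ u - g u = 0)
    (hd₂ : ∀ u, -τ < u → ∃ d : ℝ, HasDerivAt Λ₂ d u ∧
      (1 + u / τ) * d + f u * Λ₂ u - g u = 0) :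
    ∀ u ∈ Set.Ici (-τ), Λ₁ u = Λ₂ u := by
  have hτ0 : τ ≠ 0 := ne_of_gt hτ
  set Δ : ℝ → ℝ := fun u => Λ₁ u - Λ₂ u with hΔdef
  have hΔc : ContinuousOn Δ (Set.Ici (-τ)) := hc₁.sub hc₂
  -- derivative of Δ
  have hΔd : ∀ u, -τ < u → HasDerivAt Δ (-(τ * f u * Δ u) / (τ + u)) u := by
    intro u hu
    obtain ⟨d₁, hD1, he1⟩ := hd₁ u hu
    obtain ⟨d₂, hD2, he2⟩ := hd₂ u hu
    have hτu : (0:ℝ) < τ + u := by linarith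
    have h : HasDerivAt Δ (d₁ - d₂) u := hD1.sub hD2
    convert h using 1
    have hΔu : Δ u = Λ₁ u - Λ₂ u := rfl
    rw [div_eq_iff (ne_of_gt hτu), hΔu]
    field_simp at he1 he2
    ring_nf
    ring_nf at he1 he2
    nlinarith [he1, he2, sq_nonneg τ]
  -- f is bounded below by c > 0 near -τ
  set c : ℝ := f (-τ) / 2 with hcdef
  have hc : 0 < c := half_pos hfτ
  have hev : ∀ᶠ x in nhdsWithin (-τ) (Set.Ici (-τ)), c < f x :=
    (hf (-τ) Set.self_mem_Ici).eventually (eventually_gt_nhds (by simpa [hcdef] using half_lt_self hfτ))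
  rw [Filter.eventually_iff, Metric.mem_nhdsWithin_iff] at hev
  obtain ⟨δ, hδ, hδf⟩ := hev
  set b : ℝ := -τ + δ/2 with hbdef
  have hb : -τ < b := by simp [hbdef]; linarith
  have hfb : ∀ x ∈ Set.Icc (-τ) b, c ≤ f x := by
    intro x hx
    refine le_of_lt (hδf ⟨?_, hx.1⟩)
    rw [Metric.mem_ball, Real.dist_eq, abs_of_nonneg (by linarith [hx.1] : (0:ℝ) ≤ x - -τ)]
    have := hx.2
    simp [hbdef] at this ⊢
    linarith
  -- integrating factor
  set φ : ℝ → ℝ := fun s => τ * f s / (τ + s) with hφdef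
  have hφc : ContinuousOn φ (Set.Ioi (-τ)) := by
    apply ContinuousOn.div
    · exact continuousOn_const.mul (hf.mono Set.Ioi_subset_Ici_self)
    · exact (continuous_const.add continuous_id).continuousOn
    · intro x hx
      have : -τ < x := hx
      intro h; linarith [h]
  set F : ℝ → ℝ := fun u => ∫ s in b..u, φ s with hFdef
  have hFd : ∀ u, -τ < u → HasDerivAt F (φ u) u := by
    intro u hu
    have hsub : Set.uIcc b u ⊆ Set.Ioi (-τ) := by
      intro x hx
      have h1 := hx.1
      have h2 : min b u ≤ x := hx.1
      have : -τ < min b u := lt_min hb hu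
      exact lt_of_lt_of_le this h2
    exact intervalIntegral.integral_hasDerivAt_right
      ((hφc.mono hsub).intervalIntegrable)
      (hφc.stronglyMeasurableAtFilter isOpen_Ioi u hu)
      (hφc.continuousAt (Ioi_mem_nhds hu))
  -- H = Δ * exp(F) is constant
  set H : ℝ → ℝ := fun u => Δ u * Real.exp (F u) with hHdef
  have hHd : ∀ u, -τ < u → HasDerivAt H 0 u := by
    intro u hu
    have hτu : (0:ℝ) < τ + u := by linarith
    have h : HasDerivAt H _ u := (hΔd u hu).mul ((hFd u hu).exp)
    convert h using 1
    show (0:ℝ) = -(τ * f u * Δ u) / (τ + u) * Real.exp (F u)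
      + Δ u * (Real.exp (F u) * φ u)
    rw [hφdef]
    field_simp
    ring
  have hconst : ∀ p q, -τ < p → p ≤ q → H q = H p := by
    intro p q hp hpq
    have hcont : ContinuousOn H (Set.Icc p q) := by
      intro x hx
      exact (hHd x (lt_of_lt_of_le hp hx.1)).continuousAt.continuousWithinAt
    have := constant_of_has_deriv_right_zero hcont
      (fun x hx => (hHd x (lt_of_lt_of_le hp hx.1)).hasDerivWithinAt)
    exact this q (Set.right_mem_Icc.mpr hpq)
  have hHb : H b = Δ b := by
    simp [hHdef, hFdef, intervalIntegral.integral_same]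
  have key : ∀ u, -τ < u → Δ u = Δ b * Real.exp (-F u) := by
    intro u hu
    have hH : H u = Δ b := by
      rcases le_total u b with h | h
      · rw [← hHb]; exact (hconst u b hu h).symm
      · rw [← hHb]; exact hconst b u hb h
    have : Δ u * Real.exp (F u) = Δ b := hH
    rw [Real.exp_neg, ← this]
    field_simp
  -- lower bound on the backward integral
  have Fle : ∀ u, -τ < u → u ≤ b →
      F u ≤ -(c*τ) * (Real.log (τ+b) - Real.log (τ+u)) := by
    intro u hu hub
    have hτu : (0:ℝ) < τ + u := by linarith
    have hτb : (0:ℝ) < τ + b := by linarith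
    have hsub : Set.uIcc u b ⊆ Set.Ioi (-τ) := by
      intro x hx
      exact lt_of_lt_of_le (lt_min hu hb) hx.1
    have hψc : ContinuousOn (fun s => c*τ*(τ+s)⁻¹) (Set.Ioi (-τ)) := by
      apply ContinuousOn.mul continuousOn_const
      apply ContinuousOn.inv₀ (continuous_const.add continuous_id).continuousOn
      intro x hx
      have hx2 : -τ < x := hx
      intro h; have h' : τ + x = 0 := h; linarith
    have hmono : (∫ s in u..b, c*τ*(τ+s)⁻¹) ≤ ∫ s in u..b, φ s := by
      apply intervalIntegral.integral_mono_on hub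
        ((hψc.mono hsub).intervalIntegrable) ((hφc.mono hsub).intervalIntegrable)
      intro x hx
      have hx1 : -τ < x := lt_of_lt_of_le hu hx.1
      have hτx : (0:ℝ) < τ + x := by linarith
      have hfx : c ≤ f x := hfb x ⟨le_of_lt hx1, hx.2⟩
      show c*τ*(τ+x)⁻¹ ≤ τ * f x / (τ + x)
      rw [mul_inv_le_iff₀ hτx, div_mul_cancel₀ _ (ne_of_gt hτx)]
      nlinarith
    have hcalc : (∫ s in u..b, c*τ*(τ+s)⁻¹) = c*τ*(Real.log (τ+b) - Real.log (τ+u)) := by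
      rw [intervalIntegral.integral_const_mul]
      have h1 : (∫ s in u..b, (τ+s)⁻¹) = ∫ s in u..b, ((fun x => x⁻¹) (s + τ)) := by
        congr 1; ext s; rw [add_comm]
      rw [h1, intervalIntegral.integral_comp_add_right (fun x => x⁻¹) τ]
      rw [integral_inv]
      · rw [Real.log_div (by linarith) (by linarith)]
        ring_nf
      · intro h0
        have := h0.1
        have h2 : (0:ℝ) < min (u+τ) (b+τ) := lt_min (by linarith) (by linarith)
        simp only [Set.mem_uIcc] at h0
        rcases h0 with ⟨h3, h4⟩ | ⟨h3, h4⟩ <;> linarith [h2, lt_min_iff.mp h2]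
    have hsymm : F u = -(∫ s in u..b, φ s) := by
      rw [hFdef]; exact intervalIntegral.integral_symm u b
    rw [hsymm]
    nlinarith [hmono, hcalc]
  have hct : (0:ℝ) < c * τ := mul_pos hc hτ
  have hτb : (0:ℝ) < τ + b := by linarith
  -- Δ b = 0
  have hΔb : Δ b = 0 := by
    by_contra hne
    have hb0 : 0 < |Δ b| := abs_pos.mpr hne
    set M : ℝ := |Δ (-τ)| + 1 with hMdef
    have hM : 0 < M := by positivity
    have h1 := (hΔc (-τ) Set.self_mem_Ici).eventually
      (eventually_abs_sub_lt (Δ (-τ)) one_pos)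
    rw [Filter.eventually_iff, Metric.mem_nhdsWithin_iff] at h1
    obtain ⟨δ', hδ', hball⟩ := h1
    set K : ℝ := Real.log (M / |Δ b|) with hKdef
    set x₀ : ℝ := min (min (δ'/2) ((τ+b)/2))
      (Real.exp (Real.log (τ+b) - K/(c*τ) - 1)) with hx₀def
    have hx₀ : 0 < x₀ := by
      apply lt_min (lt_min (by linarith) (by linarith)) (Real.exp_pos _)
    set u : ℝ := -τ + x₀ with hudef
    have hτu : τ + u = x₀ := by rw [hudef]; ring
    have hu : -τ < u := by rw [hudef]; linarith
    have hub : u ≤ b := by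
      have h2b : x₀ ≤ (τ+b)/2 := le_trans (min_le_left _ _) (min_le_right _ _)
      have h3b : x₀ ≤ τ + b := h2b.trans (by linarith)
      calc u = -τ + x₀ := hudef
        _ ≤ -τ + (τ + b) := by linarith
        _ = b := by ring
    -- continuity bound
    have hMu : |Δ u| ≤ M := by
      have hu1 : u ∈ Metric.ball (-τ) δ' := by
        rw [Metric.mem_ball, Real.dist_eq]
        have h2 : x₀ ≤ δ'/2 := le_trans (min_le_left _ _) (min_le_left _ _)
        rw [hudef]
        rw [show -τ + x₀ - -τ = x₀ by ring, abs_of_pos hx₀]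
        linarith
      have := hball ⟨hu1, le_of_lt hu⟩
      have h3 : |Δ u - Δ (-τ)| < 1 := this
      calc |Δ u| = |(Δ u - Δ (-τ)) + Δ (-τ)| := by ring_nf
        _ ≤ |Δ u - Δ (-τ)| + |Δ (-τ)| := abs_add_le _ _
        _ ≤ M := by rw [hMdef]; linarith
    -- blow-up bound
    have hlog : Real.log (τ+u) ≤ Real.log (τ+b) - K/(c*τ) - 1 := by
      rw [hτu]
      calc Real.log x₀ ≤ Real.log (Real.exp (Real.log (τ+b) - K/(c*τ) - 1)) :=
            Real.log_le_log hx₀ (min_le_right _ _)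
        _ = Real.log (τ+b) - K/(c*τ) - 1 := Real.log_exp _
    have hF := Fle u hu hub
    have h2 : K < -F u := by
      have h4 : Real.log (τ+b) - Real.log (τ+u) ≥ K/(c*τ) + 1 := by linarith
      have h5 : c*τ*(Real.log (τ+b) - Real.log (τ+u)) ≥ c*τ*(K/(c*τ) + 1) :=
        mul_le_mul_of_nonneg_left h4 (le_of_lt hct)
      have h6 : c*τ*(K/(c*τ) + 1) = K + c*τ := by field_simp
      nlinarith
    have habs : |Δ u| = |Δ b| * Real.exp (-F u) := by
      rw [key u hu, abs_mul, abs_of_pos (Real.exp_pos _)]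
    have hlt : M < |Δ u| := by
      rw [habs]
      have h7 : M / |Δ b| < Real.exp (-F u) := by
        calc M/|Δ b| = Real.exp K := (Real.exp_log (by positivity)).symm
          _ < Real.exp (-F u) := Real.exp_lt_exp.mpr h2
      calc M = |Δ b| * (M/|Δ b|) := by field_simp
        _ < |Δ b| * Real.exp (-F u) := by exact mul_lt_mul_of_pos_left h7 hb0
    linarith
  -- conclude
  have hzero : ∀ x, -τ < x → Δ x = 0 := by
    intro x hx
    rw [key x hx, hΔb, zero_mul]
  intro u₀ hu₀
  rcases eq_or_lt_of_le (Set.mem_Ici.mp hu₀) with heq | hlt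
  · -- u₀ = -τ
    have ht1 : Filter.Tendsto Δ (nhdsWithin (-τ) (Set.Ioi (-τ))) (nhds (Δ (-τ))) :=
      (hΔc (-τ) Set.self_mem_Ici).mono_left (nhdsWithin_mono _ Set.Ioi_subset_Ici_self)
    have ht2 : Filter.Tendsto Δ (nhdsWithin (-τ) (Set.Ioi (-τ))) (nhds 0) := by
      apply Filter.Tendsto.congr' _ tendsto_const_nhds
      filter_upwards [self_mem_nhdsWithin] with x hx
      exact (hzero x hx).symm
    have h8 : Δ (-τ) = 0 := tendsto_nhds_unique ht1 ht2
    have h9 : Λ₁ (-τ) - Λ₂ (-τ) = 0 := h8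
    rw [← heq]
    linarith
  · have h9 : Λ₁ u₀ - Λ₂ u₀ = 0 := hzero u₀ hlt
    linarith
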